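/- Fix coprime integers 0 < q_1 < q_2 and let N(p) be the number of pairs (r,s) of nonnegative integers with r + s ≤ p, r q_1 + s q_2 > 0, and p | (r q_1 + s q_2). Then N(p)/p → 1/2 as p → ∞. -/

import Mathlib

open Finset Filter

private lemma gauss_sub (m : ℕ) :
    ∀ n : ℕ, 2 * ∑ k ∈ Icc 1 n, (k - m) = (n - m) * (n - m + 1) := by
  intro n
  induction n with
  | zero => simp
  | succ n ih =>
    rw [Finset.sum_Icc_succ_top (by omega), Nat.mul_add, ih]
    rcases le_or_gt m n with h | h
    · obtain ⟨j, rfl⟩ := Nat.exists_eq_add_of_le h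
      simp only [Nat.add_sub_cancel_left, show m + j + 1 - m = j + 1 by omega]
      ring
    · simp [show n - m = 0 by omega, show n + 1 - m = 0 by omega]

private lemma main_sum (q₁ q₂ p : ℕ) (h₁ : 0 < q₁) (h₁₂ : q₁ < q₂) :
    ∑ k ∈ Icc 1 q₂, ((k : ℚ) * p / q₂ - ((k - q₁ : ℕ) : ℚ) * p / ((q₂ : ℚ) - q₁)) / q₁
      = (p : ℚ) / 2 := by
  have hq1 : (0:ℚ) < q₁ := by exact_mod_cast h₁
  have hq2 : (0:ℚ) < q₂ := by exact_mod_cast h₁.trans h₁₂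
  have hd : (0:ℚ) < (q₂:ℚ) - q₁ := by
    have : (q₁:ℚ) < q₂ := by exact_mod_cast h₁₂
    linarith
  have hds : ((q₂ - q₁ : ℕ) : ℚ) = (q₂:ℚ) - q₁ := by
    push_cast [Nat.cast_sub h₁₂.le]; ring
  have S1 : (∑ k ∈ Icc 1 q₂, (k:ℚ)) = (q₂:ℚ) * (q₂ + 1) / 2 := by
    have h := gauss_sub 0 q₂
    simp only [Nat.sub_zero] at h
    have h2 := congrArg (Nat.cast : ℕ → ℚ) h
    push_cast at h2
    linarith
  have S2 : (∑ k ∈ Icc 1 q₂, ((k - q₁ : ℕ):ℚ))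
      = ((q₂:ℚ) - q₁) * (((q₂:ℚ) - q₁) + 1) / 2 := by
    have h := gauss_sub q₁ q₂
    have h2 := congrArg (Nat.cast : ℕ → ℚ) h
    push_cast [hds] at h2
    linarith
  have hA : ∀ k ∈ Icc 1 q₂,
      ((k : ℚ) * p / q₂ - ((k - q₁ : ℕ) : ℚ) * p / ((q₂ : ℚ) - q₁)) / q₁
        = (k:ℚ) * ((p:ℚ)/(q₂*q₁)) - ((k - q₁ : ℕ):ℚ) * ((p:ℚ)/((((q₂:ℚ) - q₁))*q₁)) := by
    intro k _
    field_simp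
  rw [Finset.sum_congr rfl hA, Finset.sum_sub_distrib, ← Finset.sum_mul, ← Finset.sum_mul,
    S1, S2]
  field_simp
  ring

private lemma split_sum (q₁ q₂ : ℕ) (h₁₂ : q₁ < q₂) (p : ℕ) (hp : 0 < p) :
    ((Finset.range (p + 1) ×ˢ Finset.range (p + 1)).filter fun rs =>
        rs.1 + rs.2 ≤ p ∧ 0 < rs.1 * q₁ + rs.2 * q₂ ∧
          p ∣ rs.1 * q₁ + rs.2 * q₂).card
      = ∑ k ∈ Icc 1 q₂, ((Finset.range (p + 1) ×ˢ Finset.range (p + 1)).filter fun rs =>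
          rs.1 + rs.2 ≤ p ∧ rs.1 * q₁ + rs.2 * q₂ = k * p).card := by
  rw [Finset.card_eq_sum_card_fiberwise
    (f := fun rs => (rs.1 * q₁ + rs.2 * q₂) / p) (t := Icc 1 q₂) ?_]
  · refine Finset.sum_congr rfl fun k hk => ?_
    simp only [mem_Icc] at hk
    congr 1
    ext rs
    simp only [mem_filter, mem_product, mem_range]
    constructor
    · rintro ⟨⟨⟨hr, hs⟩, hsum, hpos, hdvd⟩, hdiv⟩
      refine ⟨⟨hr, hs⟩, hsum, ?_⟩
      obtain ⟨c, hc⟩ := hdvd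
      rw [hc, Nat.mul_div_cancel_left _ hp] at hdiv
      rw [hc, hdiv, Nat.mul_comm]
    · rintro ⟨⟨hr, hs⟩, hsum, hval⟩
      refine ⟨⟨⟨hr, hs⟩, hsum, ?_, ⟨k, by rw [hval, Nat.mul_comm]⟩⟩, ?_⟩
      · rw [hval]; exact Nat.mul_pos hk.1 hp
      · rw [hval, Nat.mul_div_cancel _ hp]
  · rintro ⟨r, s⟩ hrs
    simp only [Finset.mem_coe, mem_filter, mem_product, mem_range] at hrs
    obtain ⟨⟨hr, hs⟩, hsum, hpos, hdvd⟩ := hrs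
    simp only [Finset.mem_coe, mem_Icc]
    constructor
    · exact Nat.one_le_div_iff hp |>.mpr (Nat.le_of_dvd hpos hdvd)
    · have hle : r * q₁ + s * q₂ ≤ p * q₂ := by
        calc r * q₁ + s * q₂ ≤ r * q₂ + s * q₂ :=
              Nat.add_le_add_right (Nat.mul_le_mul_left r h₁₂.le) _
        _ = (r + s) * q₂ := by ring
        _ ≤ p * q₂ := Nat.mul_le_mul_right _ hsum
      have := Nat.div_le_div_right (c := p) hle
      rwa [Nat.mul_div_cancel_left _ hp] at this

private lemma slice_bij (q₁ q₂ : ℕ) (h₁ : 0 < q₁) (h₁₂ : q₁ < q₂) (a b : ℤ)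
    (hab : a * q₁ + b * q₂ = 1) (p k : ℕ) :
    ((Finset.range (p + 1) ×ˢ Finset.range (p + 1)).filter fun rs =>
        rs.1 + rs.2 ≤ p ∧ rs.1 * q₁ + rs.2 * q₂ = k * p).card
      = ((Finset.Ico (max 0 ⌈(((k : ℚ) - q₁) * p) / ((q₂ : ℚ) - q₁)⌉)
          (⌊((k : ℚ) * p) / q₂⌋ + 1)).filter
          (· ≡ (b * k * p) [ZMOD (q₁ : ℤ)])).card := by
  have hq1 : (0:ℚ) < q₁ := by exact_mod_cast h₁
  have hq2 : (0:ℚ) < q₂ := by exact_mod_cast h₁.trans h₁₂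
  have hd : (0:ℚ) < (q₂:ℚ) - q₁ := by
    have : (q₁:ℚ) < q₂ := by exact_mod_cast h₁₂
    linarith
  apply Finset.card_bij (fun rs _ => (rs.2 : ℤ))
  · rintro ⟨r, s⟩ hrs
    simp only [mem_filter, mem_product, mem_range] at hrs
    obtain ⟨⟨hr, hs⟩, hsum, hval⟩ := hrs
    have hvalZ : (r:ℤ) * q₁ + s * q₂ = k * p := by exact_mod_cast hval
    have hvalQ : (r:ℚ) * q₁ + s * q₂ = k * p := by exact_mod_cast hval
    have hsumQ : (r:ℚ) + s ≤ p := by exact_mod_cast hsum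
    simp only [mem_filter, mem_Ico]
    refine ⟨⟨?_, ?_⟩, ?_⟩
    · refine max_le (by exact_mod_cast Nat.zero_le s) (Int.ceil_le.mpr ?_)
      push_cast
      rw [div_le_iff₀ hd]
      nlinarith [mul_le_mul_of_nonneg_left hsumQ hq1.le]
    · have : (s:ℤ) ≤ ⌊((k : ℚ) * p) / q₂⌋ := by
        refine Int.le_floor.mpr ?_
        push_cast
        rw [le_div_iff₀ hq2]
        nlinarith [mul_nonneg (Nat.cast_nonneg (α := ℚ) r) hq1.le]
      omega
    · exact Int.modEq_iff_dvd.mpr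
        ⟨b * r - s * a, by linear_combination (-b) * hvalZ + (s:ℤ) * hab⟩
  · rintro ⟨r1, s1⟩ h1 ⟨r2, s2⟩ h2 hss
    simp only [mem_filter, mem_product, mem_range] at h1 h2
    have hs : s1 = s2 := by exact_mod_cast hss
    subst hs
    have : r1 * q₁ = r2 * q₁ := by omega
    have : r1 = r2 := Nat.eq_of_mul_eq_mul_right h₁ this
    simp [this]
  · rintro s hsT
    simp only [mem_filter, mem_Ico] at hsT
    obtain ⟨⟨hL, hU⟩, hmod⟩ := hsT
    have hs0 : 0 ≤ s := le_trans (le_max_left _ _) hL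
    obtain ⟨t, ht⟩ : (q₁:ℤ) ∣ (b * k * p) - s := Int.ModEq.dvd hmod
    have hq1Z : (0:ℤ) < q₁ := by exact_mod_cast h₁
    have hw : (k:ℤ) * p - q₂ * s = q₁ * (a * k * p + q₂ * t) := by
      linear_combination (q₂:ℤ) * ht - (k:ℤ) * p * hab
    set w : ℤ := a * k * p + q₂ * t with hw_def
    have hsU : (s:ℤ) ≤ ⌊((k : ℚ) * p) / q₂⌋ := by omega
    have hq2s : s * (q₂:ℤ) ≤ (k:ℤ) * p := by
      have h := Int.le_floor.mp hsU
      rw [le_div_iff₀ hq2] at h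
      exact_mod_cast h
    have hw0 : 0 ≤ w := by
      refine le_of_mul_le_mul_left ?_ hq1Z
      rw [mul_zero]
      linarith
    have hws : w + s ≤ p := by
      have hceil : ⌈(((k : ℚ) - q₁) * p) / ((q₂ : ℚ) - q₁)⌉ ≤ s :=
        le_trans (le_max_right _ _) hL
      have h1' : (((k : ℚ) - q₁) * p) / ((q₂ : ℚ) - q₁) ≤ (s:ℚ) := Int.ceil_le.mp hceil
      rw [div_le_iff₀ hd] at h1'
      have h2' : ((k:ℤ) - q₁) * p ≤ s * ((q₂:ℤ) - q₁) := by exact_mod_cast h1'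
      have h3' : (q₁:ℤ) * (w + s) ≤ q₁ * p := by
        have heq : (q₁:ℤ) * (w + s) = k * p - q₂ * s + q₁ * s := by
          linear_combination -hw
        rw [heq]; nlinarith
      exact le_of_mul_le_mul_left h3' hq1Z
    refine ⟨(w.toNat, s.toNat), ?_, ?_⟩
    · simp only [mem_filter, mem_product, mem_range]
      refine ⟨⟨?_, ?_⟩, ?_, ?_⟩
      · omega
      · omega
      · omega
      · have : (w.toNat : ℤ) * q₁ + (s.toNat : ℤ) * q₂ = k * p := by
          rw [Int.toNat_of_nonneg hw0, Int.toNat_of_nonneg hs0]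
          linarith [hw]
        exact_mod_cast this
    · simp [Int.toNat_of_nonneg hs0]

private lemma slice_bound (q₁ q₂ : ℕ) (h₁ : 0 < q₁) (h₁₂ : q₁ < q₂)
    (p k : ℕ) (hk2 : k ≤ q₂) (v : ℤ) :
    abs ((((Finset.Ico (max 0 ⌈(((k : ℚ) - q₁) * p) / ((q₂ : ℚ) - q₁)⌉)
          (⌊((k : ℚ) * p) / q₂⌋ + 1)).filter
          (· ≡ v [ZMOD (q₁ : ℤ)])).card : ℚ)
      - ((k : ℚ) * p / q₂ - ((k - q₁ : ℕ) : ℚ) * p / ((q₂ : ℚ) - q₁)) / q₁) ≤ 2 := by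
  have hq1 : (0:ℚ) < q₁ := by exact_mod_cast h₁
  have hq2 : (0:ℚ) < q₂ := by exact_mod_cast h₁.trans h₁₂
  have hq1' : (1:ℚ) ≤ q₁ := by exact_mod_cast h₁
  have hd : (0:ℚ) < (q₂:ℚ) - q₁ := by
    have : (q₁:ℚ) < q₂ := by exact_mod_cast h₁₂
    linarith
  have hq1Z : (0:ℤ) < (q₁:ℤ) := by exact_mod_cast h₁
  set cQ : ℚ := (((k : ℚ) - q₁) * p) / ((q₂ : ℚ) - q₁) with hcQ
  set eQ : ℚ := ((k - q₁ : ℕ) : ℚ) * p / ((q₂ : ℚ) - q₁) with heQ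
  set L : ℤ := max 0 ⌈cQ⌉ with hL
  set U : ℤ := ⌊((k : ℚ) * p) / q₂⌋ with hU
  set mk : ℚ := (k : ℚ) * p / q₂ - eQ with hmk
  have heq_max : eQ = max 0 cQ := by
    rcases le_or_gt k q₁ with h | h
    · have h0 : k - q₁ = 0 := by omega
      have hc0 : cQ ≤ 0 := by
        rw [hcQ]
        apply div_nonpos_of_nonpos_of_nonneg _ hd.le
        have : (k:ℚ) ≤ q₁ := by exact_mod_cast h
        nlinarith [show (0:ℚ) ≤ (p:ℚ) from by positivity]
      rw [heQ, h0, max_eq_left hc0]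
      simp
    · have hc0 : (0:ℚ) ≤ cQ := by
        rw [hcQ]
        apply div_nonneg _ hd.le
        have : (q₁:ℚ) ≤ k := by exact_mod_cast h.le
        nlinarith [show (0:ℚ) ≤ (p:ℚ) from by positivity]
      rw [heQ, max_eq_right hc0, hcQ]
      congr 2
      push_cast [Nat.cast_sub h.le]
      ring
  have hL_low : eQ ≤ (L:ℚ) := by
    rw [heq_max, hL]
    push_cast
    exact max_le_max le_rfl (Int.le_ceil cQ)
  have hL_high : (L:ℚ) ≤ eQ + 1 := by
    rw [heq_max, hL]
    push_cast
    refine max_le (by positivity) ?_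
    have := Int.ceil_lt_add_one cQ
    have h2 : cQ ≤ max 0 cQ := le_max_right _ _
    linarith
  have hU_le : (U:ℚ) ≤ (k:ℚ) * p / q₂ := Int.floor_le _
  have hU_gt : (k:ℚ) * p / q₂ - 1 < (U:ℚ) := Int.sub_one_lt_floor _
  have hmk0 : 0 ≤ mk := by
    rw [hmk, heQ]
    rcases le_or_gt k q₁ with h | h
    · have h0 : k - q₁ = 0 := by omega
      rw [h0]
      simp only [Nat.cast_zero, zero_mul, zero_div, sub_zero]
      positivity
    · rw [sub_nonneg, div_le_div_iff₀ hd hq2]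
      have hkq : ((k - q₁:ℕ):ℚ) = (k:ℚ) - q₁ := by
        push_cast [Nat.cast_sub h.le]; ring
      rw [hkq]
      have hkq2 : (k:ℚ) ≤ q₂ := by exact_mod_cast hk2
      have hpn : (0:ℚ) ≤ p := by positivity
      nlinarith [mul_nonneg (mul_nonneg (sub_nonneg.mpr hkq2) hpn) hq1.le]
  have hcard := Int.Ico_filter_modEq_card L (U + 1) hq1Z v
  push_cast at hcard
  have hcardQ := congrArg (fun z : ℤ => (z : ℚ)) hcard
  push_cast at hcardQ
  set c : ℕ := ((Finset.Ico L (U+1)).filter (· ≡ v [ZMOD (q₁ : ℤ)])).card with hc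
  set Y1 : ℤ := ⌈((U:ℚ) + 1 - (v:ℚ)) / ((q₁:ℕ):ℚ)⌉ with hY1
  set Y2 : ℤ := ⌈((L:ℚ) - (v:ℚ)) / ((q₁:ℕ):ℚ)⌉ with hY2
  have hx1 : ((U:ℚ) + 1 - (v:ℚ)) / ((q₁:ℕ):ℚ) ≤ (Y1:ℚ) := Int.le_ceil _
  have hx1' : (Y1:ℚ) < ((U:ℚ) + 1 - (v:ℚ)) / ((q₁:ℕ):ℚ) + 1 := Int.ceil_lt_add_one _
  have hx2 : ((L:ℚ) - (v:ℚ)) / ((q₁:ℕ):ℚ) ≤ (Y2:ℚ) := Int.le_ceil _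
  have hx2' : (Y2:ℚ) < ((L:ℚ) - (v:ℚ)) / ((q₁:ℕ):ℚ) + 1 := Int.ceil_lt_add_one _
  have hdiff : ((U:ℚ) + 1 - (v:ℚ)) / ((q₁:ℕ):ℚ) - (((L:ℚ) - (v:ℚ)) / ((q₁:ℕ):ℚ))
      = ((U:ℚ) + 1 - L) / q₁ := by
    field_simp
    ring
  have hXQ1 : (Y1:ℚ) - Y2 ≤ ((U:ℚ) + 1 - L) / q₁ + 1 := by linarith
  have hXQ2 : ((U:ℚ) + 1 - L) / q₁ - 1 ≤ (Y1:ℚ) - Y2 := by linarith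
  have hDU : ((U:ℚ) + 1 - L) / q₁ ≤ (mk + 1) / q₁ := by
    rw [div_le_div_iff_of_pos_right hq1, hmk]
    linarith
  have hDL : (mk - 1) / q₁ ≤ ((U:ℚ) + 1 - L) / q₁ := by
    rw [div_le_div_iff_of_pos_right hq1, hmk]
    linarith
  have hone : (1:ℚ) / q₁ ≤ 1 := by
    rw [div_le_one hq1]
    exact hq1'
  have hsplit1 : (mk + 1) / q₁ = mk / q₁ + 1 / q₁ := by ring
  have hsplit2 : (mk - 1) / q₁ = mk / q₁ - 1 / q₁ := by ring
  have hmkq : 0 ≤ mk / q₁ := div_nonneg hmk0 hq1.le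
  have h1q1 : (0:ℚ) < 1 / q₁ := by positivity
  rw [abs_le]
  have hcmax : (c:ℚ) = max ((Y1:ℚ) - Y2) 0 := hcardQ
  constructor
  · rw [hcmax]
    have hXm : (Y1:ℚ) - Y2 ≤ max ((Y1:ℚ) - Y2) 0 := le_max_left _ _
    linarith
  · rw [hcmax, sub_le_iff_le_add]
    refine max_le (by linarith) (by linarith)

private lemma N_bound (q₁ q₂ : ℕ) (h₁ : 0 < q₁) (h₁₂ : q₁ < q₂) (hcop : Nat.Coprime q₁ q₂)
    (p : ℕ) (hp : 0 < p) :
    abs ((((Finset.range (p + 1) ×ˢ Finset.range (p + 1)).filter fun rs =>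
        rs.1 + rs.2 ≤ p ∧ 0 < rs.1 * q₁ + rs.2 * q₂ ∧
          p ∣ rs.1 * q₁ + rs.2 * q₂).card : ℚ) - (p:ℚ)/2) ≤ 2 * q₂ := by
  obtain ⟨a, b, hab⟩ : IsCoprime (q₁ : ℤ) (q₂ : ℤ) := Nat.isCoprime_iff_coprime.mpr hcop
  rw [split_sum q₁ q₂ h₁₂ p hp, ← main_sum q₁ q₂ p h₁ h₁₂]
  push_cast
  rw [← Finset.sum_sub_distrib]
  refine le_trans (Finset.abs_sum_le_sum_abs _ _) ?_
  have hbound : ∀ k ∈ Icc 1 q₂,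
      abs ((((Finset.range (p + 1) ×ˢ Finset.range (p + 1)).filter fun rs =>
          rs.1 + rs.2 ≤ p ∧ rs.1 * q₁ + rs.2 * q₂ = k * p).card : ℚ)
        - ((k : ℚ) * p / q₂ - ((k - q₁ : ℕ) : ℚ) * p / ((q₂ : ℚ) - q₁)) / q₁) ≤ 2 := by
    intro k hk
    simp only [mem_Icc] at hk
    rw [slice_bij q₁ q₂ h₁ h₁₂ a b hab p k]
    exact slice_bound q₁ q₂ h₁ h₁₂ p k hk.2 (b * k * p)
  refine le_trans (Finset.sum_le_sum hbound) ?_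
  rw [Finset.sum_const, Nat.card_Icc]
  simp only [Nat.add_sub_cancel, nsmul_eq_mul]
  ring_nf
  rfl

theorem stmt_16 (q₁ q₂ : ℕ) (h₁ : 0 < q₁) (h₁₂ : q₁ < q₂) (hcop : Nat.Coprime q₁ q₂)
    (N : ℕ → ℕ)
    (hN : ∀ p, N p = ((Finset.range (p + 1) ×ˢ Finset.range (p + 1)).filter fun rs =>
        rs.1 + rs.2 ≤ p ∧ 0 < rs.1 * q₁ + rs.2 * q₂ ∧
          p ∣ rs.1 * q₁ + rs.2 * q₂).card) :
    Tendsto (fun p : ℕ => (N p : ℝ) / p) atTop (nhds (1 / 2)) := by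
  have hC : Tendsto (fun p : ℕ => (2 * q₂ : ℝ) / p) atTop (nhds 0) :=
    tendsto_const_div_atTop_nhds_zero_nat _
  have hg : Tendsto (fun p : ℕ => 1/2 - (2 * q₂ : ℝ) / p) atTop (nhds (1/2)) := by
    simpa using (tendsto_const_nhds (x := (1/2:ℝ)) (f := atTop)).sub hC
  have hh : Tendsto (fun p : ℕ => 1/2 + (2 * q₂ : ℝ) / p) atTop (nhds (1/2)) := by
    simpa using (tendsto_const_nhds (x := (1/2:ℝ)) (f := atTop)).add hC
  have hbR : ∀ p : ℕ, 0 < p → p ≤ 2 * N p + 4 * q₂ ∧ 2 * N p ≤ p + 4 * q₂ := by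
    intro p hp
    have hb := N_bound q₁ q₂ h₁ h₁₂ hcop p hp
    rw [← hN p] at hb
    have h1 := (abs_le.mp hb).1
    have h2 := (abs_le.mp hb).2
    constructor
    · exact_mod_cast (show ((p:ℕ):ℚ) ≤ 2*((N p : ℕ):ℚ) + 4*((q₂:ℕ):ℚ) by linarith)
    · exact_mod_cast (show 2*((N p : ℕ):ℚ) ≤ ((p:ℕ):ℚ) + 4*((q₂:ℕ):ℚ) by linarith)
  refine tendsto_of_tendsto_of_tendsto_of_le_of_le' hg hh ?_ ?_
  · filter_upwards [eventually_ge_atTop 1] with p hp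
    have hp0 : (0:ℝ) < p := by exact_mod_cast hp
    have hA : (p:ℝ) ≤ 2 * (N p) + 4 * q₂ := by exact_mod_cast (hbR p hp).1
    rw [le_div_iff₀ hp0]
    have heq : (1/2 - (2 * q₂ : ℝ)/p) * p = (p:ℝ)/2 - 2*q₂ := by
      field_simp
    rw [heq]
    linarith
  · filter_upwards [eventually_ge_atTop 1] with p hp
    have hp0 : (0:ℝ) < p := by exact_mod_cast hp
    have hB : 2 * ((N p):ℝ) ≤ p + 4 * q₂ := by exact_mod_cast (hbR p hp).2
    rw [div_le_iff₀ hp0]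
    have heq : (1/2 + (2 * q₂ : ℝ)/p) * p = (p:ℝ)/2 + 2*q₂ := by
      field_simp
    rw [heq]
    linarith
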